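/- For all t > 0, the Gamma function satisfies √(2π)·t^(t−1/2)·e^(−t) ≤ Γ(t) ≤ √(2π)·t^(t−1/2)·e^(−t)·e^(1/(12t)). -/

import Mathlib

open Real

open Filter Finset Topology


noncomputable def dG (t : ℝ) : ℝ := Real.log (Real.Gamma t) - (t - 1/2) * Real.log t + t

lemma hasSum_c {t : ℝ} (ht : 0 < t) :
    HasSum (fun k : ℕ => (1 : ℝ) / (2 * (k+1) + 1) * ((1 / (2 * t + 1)) ^ 2) ^ (k+1))
      ((t + 1/2) * Real.log (1 + t⁻¹) - 1) := by
  have h2t : (2*t+1) ≠ 0 := by positivity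
  have := (hasSum_log_one_add_inv ht).mul_left (t + 1/2)
  have heq : ∀ k : ℕ, (t + 1/2) * ((2 : ℝ) * (1 / (2 * k + 1)) * (1 / (2 * t + 1)) ^ (2 * k + 1))
      = (1 : ℝ) / (2 * k + 1) * ((1 / (2 * t + 1)) ^ 2) ^ k := by
    intro k
    rw [pow_succ, pow_mul]
    field_simp
  rw [funext heq] at this
  have h0 : ((1:ℝ) / (2 * (0:ℕ) + 1) * ((1 / (2 * t + 1)) ^ 2) ^ (0:ℕ)) = 1 := by norm_num
  have h2 := (hasSum_nat_add_iff' (f := fun k : ℕ => (1 : ℝ) / (2 * k + 1) * ((1 / (2 * t + 1)) ^ 2) ^ k) 1).mpr this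
  simp only [range_one, sum_singleton] at h2
  rw [h0] at h2
  convert h2 using 2 with k
  · rfl
  push_cast; ring

lemma c_nonneg {t : ℝ} (ht : 0 < t) : 0 ≤ (t + 1/2) * Real.log (1 + t⁻¹) - 1 :=
  (hasSum_c ht).nonneg fun k => by positivity

lemma c_le {t : ℝ} (ht : 0 < t) :
    (t + 1/2) * Real.log (1 + t⁻¹) - 1 ≤ 1/(12*t) - 1/(12*(t+1)) := by
  set x : ℝ := (1 / (2 * t + 1)) ^ 2 with hxdef
  have hx0 : 0 ≤ x := sq_nonneg _
  have hx1 : x < 1 := by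
    rw [hxdef, one_div, inv_pow]
    exact inv_lt_one_of_one_lt₀ (one_lt_pow₀ (by linarith) two_ne_zero)
  have g : HasSum (fun k : ℕ => (1/3 : ℝ) * x ^ (k+1)) (1/3 * (x / (1 - x))) := by
    have := (hasSum_geometric_of_lt_one hx0 hx1).mul_left (1/3 * x)
    convert this using 1
    · rfl
    · funext k; ring
    · rw [div_eq_mul_inv x, ← mul_assoc]
  have hle : ∀ k : ℕ, (1:ℝ)/(2*((k:ℝ)+1)+1) * x ^ (k+1) ≤ 1/3 * x ^ (k+1) := by
    intro k
    apply mul_le_mul_of_nonneg_right ?_ (pow_nonneg hx0 _)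
    apply one_div_le_one_div_of_le (by norm_num)
    have : (0:ℝ) ≤ (k:ℝ) := Nat.cast_nonneg k
    linarith
  have key := hasSum_le (fun k => by push_cast; exact hle k) (hasSum_c ht) g
  refine key.trans (le_of_eq ?_)
  have h1 : (2*t+1) ≠ 0 := by positivity
  have h2 : 1 - x ≠ 0 := by linarith
  rw [hxdef] at h2 ⊢
  have h3 : t + 1 ≠ 0 := by positivity
  field_simp
  have h4 : t * 12 + t ^ 2 * 12 ≠ 0 := by positivity
  have h5 : (2 * t + 1) ^ 2 - 1 ≠ 0 := by nlinarith
  rw [div_eq_iff h5]; ring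

lemma dG_step {t : ℝ} (ht : 0 < t) :
    dG t - dG (t+1) = (t + 1/2) * Real.log (1 + t⁻¹) - 1 := by
  have hGpos : 0 < Real.Gamma t := Real.Gamma_pos_of_pos ht
  have hlog : Real.log (Real.Gamma (t+1)) = Real.log t + Real.log (Real.Gamma t) := by
    rw [Real.Gamma_add_one ht.ne', Real.log_mul ht.ne' hGpos.ne']
  have hl : Real.log (1 + t⁻¹) = Real.log (t+1) - Real.log t := by
    rw [← Real.log_div (by positivity) ht.ne']
    congr 1
    field_simp
  simp only [dG, hlog, hl]
  ring

lemma dG_tele {t : ℝ} (ht : 0 < t) (n : ℕ) :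
    0 ≤ dG t - dG (t + n) ∧ dG t - dG (t + n) ≤ 1/(12*t) - 1/(12*(t+n)) := by
  induction n with
  | zero => simp
  | succ n ih =>
    have htn : 0 < t + (n:ℝ) := by positivity
    have hstep := dG_step htn
    have h0 := c_nonneg htn
    have h1 := c_le htn
    push_cast
    have harg : t + ((n:ℝ)+1) = (t + (n:ℝ)) + 1 := by ring
    rw [harg]
    constructor <;> [linarith [ih.1]; linarith [ih.2]]

open Topology

lemma logGamma_add_one {x : ℝ} (hx : 0 < x) :
    Real.log (Real.Gamma (x+1)) = Real.log (Real.Gamma x) + Real.log x := by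
  rw [Real.Gamma_add_one hx.ne', Real.log_mul hx.ne' (Real.Gamma_pos_of_pos hx).ne', add_comm]

lemma A_le {t : ℝ} (ht : 0 < t) (ht1 : t ≤ 1) {n : ℕ} (hn : 1 ≤ n) :
    Real.log (Real.Gamma (t+n)) ≤ Real.log (Real.Gamma ((n:ℝ)+1)) + (t-1) * Real.log n := by
  have hnR : (1:ℝ) ≤ (n:ℝ) := by exact_mod_cast hn
  have hn0 : (0:ℝ) < (n:ℝ) := by linarith
  have h := Real.convexOn_log_Gamma.2 (Set.mem_Ioi.mpr hn0)
    (Set.mem_Ioi.mpr (by linarith : (0:ℝ) < (n:ℝ)+1))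
    (by linarith : (0:ℝ) ≤ 1-t) ht.le (by ring)
  simp only [smul_eq_mul, Function.comp_apply] at h
  rw [show (1-t) * (n:ℝ) + t * ((n:ℝ)+1) = t + n by ring] at h
  rw [logGamma_add_one hn0] at h ⊢
  linarith

lemma A_ge {t : ℝ} (ht : 0 < t) (ht1 : t ≤ 1) {n : ℕ} (hn : 1 ≤ n) :
    Real.log (Real.Gamma ((n:ℝ)+1)) + (t-1) * Real.log ((n:ℝ)+1) ≤ Real.log (Real.Gamma (t+n)) := by
  have hnR : (1:ℝ) ≤ (n:ℝ) := by exact_mod_cast hn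
  have h2t : (0:ℝ) < 2 - t := by linarith
  have h := Real.convexOn_log_Gamma.2
    (Set.mem_Ioi.mpr (by linarith : (0:ℝ) < t + n)) (Set.mem_Ioi.mpr (by linarith : (0:ℝ) < (n:ℝ)+2))
    (show (0:ℝ) ≤ 1/(2-t) by positivity)
    (show (0:ℝ) ≤ (1-t)/(2-t) from div_nonneg (by linarith) (by linarith)) (by field_simp; ring)
  simp only [smul_eq_mul, Function.comp_apply] at h
  rw [show 1/(2-t) * (t + n) + (1-t)/(2-t) * ((n:ℝ)+2) = (n:ℝ)+1 by field_simp; ring] at h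
  have h2 : Real.log (Real.Gamma ((n:ℝ)+2)) = Real.log (Real.Gamma ((n:ℝ)+1)) + Real.log ((n:ℝ)+1) := by
    have := logGamma_add_one (x := (n:ℝ)+1) (by linarith)
    rwa [show (n:ℝ)+1+1 = (n:ℝ)+2 by ring] at this
  rw [h2, div_mul_eq_mul_div, div_mul_eq_mul_div, ← add_div, le_div_iff₀ h2t] at h
  nlinarith [h]

lemma hA_tendsto {t : ℝ} (ht : 0 < t) (ht1 : t ≤ 1) :
    Tendsto (fun n : ℕ => Real.log (Real.Gamma (t+n)) - Real.log (Real.Gamma ((n:ℝ)+1))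
      - (t-1) * Real.log n) atTop (𝓝 0) := by
  have hlow : Tendsto (fun n : ℕ => (t-1) * (Real.log ((n:ℝ)+1) - Real.log n)) atTop (𝓝 0) := by
    have h1 : Tendsto (fun n : ℕ => Real.log (1 + ((n:ℝ))⁻¹)) atTop (𝓝 0) := by
      have h0 : Tendsto (fun n : ℕ => ((n:ℝ))⁻¹) atTop (𝓝 0) := by
        simpa using tendsto_one_div_atTop_nhds_zero_nat (𝕜 := ℝ)
      have := ((h0.const_add (1:ℝ)).log (by norm_num))
      rwa [add_zero, Real.log_one] at this
    have h2 := h1.const_mul (t-1)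
    rw [mul_zero] at h2
    apply h2.congr'
    filter_upwards [eventually_ge_atTop 1] with n hn
    have hn0 : (0:ℝ) < n := by exact_mod_cast hn
    rw [show (1:ℝ) + ((n:ℝ))⁻¹ = ((n:ℝ)+1)/n by field_simp, Real.log_div (by positivity) hn0.ne']
  refine tendsto_of_tendsto_of_tendsto_of_le_of_le' hlow tendsto_const_nhds ?_ ?_
  · filter_upwards [eventually_ge_atTop 1] with n hn
    have := A_ge ht ht1 hn
    linarith
  · filter_upwards [eventually_ge_atTop 1] with n hn
    have := A_le ht ht1 hn
    linarith

lemma hB_tendsto {t : ℝ} (ht : 0 < t) :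
    Tendsto (fun n : ℕ => Real.log (Stirling.stirlingSeq n) + (1/2)*Real.log 2 + t
      - (t + n - 1/2) * Real.log (1 + t/n)) atTop (𝓝 (Real.log (Real.sqrt (2*π)))) := by
  have hS : Tendsto (fun n : ℕ => Real.log (Stirling.stirlingSeq n)) atTop
      (𝓝 (Real.log (Real.sqrt π))) :=
    Stirling.tendsto_stirlingSeq_sqrt_pi.log (by positivity)
  have hN : Tendsto (fun n : ℕ => (n:ℝ) * Real.log (1 + t/n)) atTop (𝓝 t) :=
    (Real.tendsto_mul_log_one_add_div_atTop t).comp tendsto_natCast_atTop_atTop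
  have hL0 : Tendsto (fun n : ℕ => Real.log (1 + t/n)) atTop (𝓝 0) := by
    have := ((tendsto_const_div_atTop_nhds_zero_nat t).const_add (1:ℝ)).log (by norm_num)
    simp only [add_zero, Real.log_one] at this
    simpa [div_eq_mul_inv] using this
  have h := (hS.add_const ((1/2)*Real.log 2 + t)).sub (hN.add (hL0.const_mul (t - 1/2)))
  have hval : Real.log (Real.sqrt π) + ((1/2)*Real.log 2 + t) - (t + (t-1/2)*0)
      = Real.log (Real.sqrt (2*π)) := by
    rw [Real.log_sqrt Real.pi_pos.le, Real.log_sqrt (by positivity),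
      Real.log_mul (by norm_num) Real.pi_pos.ne']
    ring
  rw [hval] at h
  apply h.congr
  intro n
  ring

lemma dG_tendsto_aux {t : ℝ} (ht : 0 < t) (ht1 : t ≤ 1) :
    Tendsto (fun n : ℕ => dG (t + n)) atTop (𝓝 (Real.log (Real.sqrt (2*π)))) := by
  have h := (hA_tendsto ht ht1).add (hB_tendsto ht)
  rw [zero_add] at h
  apply h.congr'
  filter_upwards [eventually_ge_atTop 1] with n hn
  have hnR : (1:ℝ) ≤ (n:ℝ) := by exact_mod_cast hn
  have hn0 : (0:ℝ) < (n:ℝ) := by linarith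
  have hfact : Real.log (Real.Gamma ((n:ℝ)+1)) = Real.log (Nat.factorial n) := by
    rw [Real.Gamma_nat_eq_factorial]
  have hSf := Stirling.log_stirlingSeq_formula n
  have hlog1 : Real.log (1 + t/n) = Real.log (t+n) - Real.log n := by
    rw [show (1:ℝ) + t/n = (t+n)/n by field_simp; ring,
      Real.log_div (by positivity) hn0.ne']
  have hlog2n : Real.log (2*(n:ℝ)) = Real.log 2 + Real.log n :=
    Real.log_mul (by norm_num) hn0.ne'
  have hlogne : Real.log ((n:ℝ)/Real.exp 1) = Real.log n - 1 := by
    rw [Real.log_div hn0.ne' (Real.exp_ne_zero 1), Real.log_exp]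
  rw [hSf, hlog2n, hlogne] at *
  simp only [dG, hfact, hlog1]
  ring

lemma dG_tendsto {t : ℝ} (ht : 0 < t) :
    Tendsto (fun n : ℕ => dG (t + n)) atTop (𝓝 (Real.log (Real.sqrt (2*π)))) := by
  set k := ⌈t⌉₊ - 1 with hk
  have hceil : 1 ≤ ⌈t⌉₊ := Nat.ceil_pos.mpr ht
  have hkR : (k:ℝ) = (⌈t⌉₊:ℝ) - 1 := by
    rw [hk, Nat.cast_sub hceil, Nat.cast_one]
  have h1 : (k:ℝ) < t := by
    have := Nat.ceil_lt_add_one ht.le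
    rw [hkR]; linarith
  have h2 : t - (k:ℝ) ≤ 1 := by
    have := Nat.le_ceil t
    rw [hkR]; linarith
  have H := dG_tendsto_aux (t := t - k) (by linarith) h2
  have h3 := H.comp (tendsto_add_atTop_nat k)
  apply h3.congr
  intro n
  simp only [Function.comp_apply]
  congr 1
  push_cast
  ring

theorem stmt_1 (t : ℝ) (ht : 0 < t) :
    Real.sqrt (2 * π) * t ^ (t - 1/2) * Real.exp (-t) ≤ Real.Gamma t ∧
    Real.Gamma t ≤ Real.sqrt (2 * π) * t ^ (t - 1/2) * Real.exp (-t) * Real.exp (1 / (12 * t)) := by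
  have hG : 0 < Real.Gamma t := Real.Gamma_pos_of_pos ht
  set L := Real.log (Real.sqrt (2*π)) with hL
  have H := dG_tendsto ht
  have hlow : L ≤ dG t := le_of_tendsto H (Filter.Eventually.of_forall fun n => by
    have := (dG_tele ht n).1; linarith)
  have hup : dG t ≤ L + 1/(12*t) := by
    have key : ∀ n : ℕ, dG t ≤ dG (t + n) + 1/(12*t) := fun n => by
      have h1 := (dG_tele ht n).2
      have h2 : 0 ≤ 1/(12*(t+n)) := by positivity
      linarith
    exact ge_of_tendsto (H.add_const (1/(12*t))) (Filter.Eventually.of_forall key)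
  have hsqrt : (0:ℝ) < Real.sqrt (2*π) := Real.sqrt_pos.mpr (by positivity)
  have hrw : Real.sqrt (2*π) * t ^ (t - 1/2) * Real.exp (-t)
      = Real.exp (L + (t - 1/2) * Real.log t + -t) := by
    rw [Real.rpow_def_of_pos ht]
    nth_rewrite 1 [← Real.exp_log hsqrt]
    rw [← Real.exp_add, ← Real.exp_add, hL]
    ring_nf
  simp only [dG] at hlow hup
  constructor
  · rw [hrw, ← Real.exp_log hG]
    apply Real.exp_le_exp.mpr
    linarith
  · rw [hrw, ← Real.exp_add]
    nth_rewrite 1 [← Real.exp_log hG]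
    apply Real.exp_le_exp.mpr
    linarith
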